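/- The associated Stirling numbers of the first kind satisfy the recurrence [n over k]_{≥m} = ∑_{i=m-1}^{n-1} ((n-1)!/(n-1-i)!) * [n-i-1 over k-1]_{≥m} for n, k ≥ 1, with [0 over 0]_{≥m} = 1 and [n over 0]_{≥m} = [0 over n]_{≥m} = 0 for n > 0. -/

import Mathlib

open Finset Equiv

/-- The number of cycles of a permutation of `Fin n`, counting fixed points as
1-cycles. -/
def cycleCount {n : ℕ} (σ : Equiv.Perm (Fin n)) : ℕ :=
  σ.cycleType.card + (Finset.univ.filter fun x => σ x = x).card

/-- `[n over k]_{≥ m}`: the number of permutations of `Fin n` with exactly `k`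
cycles, each of length at least `m`.  (The lengths of nontrivial cycles are
recorded by `cycleType`; a fixed point is a cycle of length `1`, allowed only
when `m ≤ 1`.) -/
noncomputable def stirAssociated (m n k : ℕ) : ℕ :=
  Nat.card {σ : Equiv.Perm (Fin n) //
    cycleCount σ = k ∧ (∀ c ∈ σ.cycleType, m ≤ c) ∧ ∀ x, σ x = x → m ≤ 1}

open Equiv.Perm List


variable {α : Type*} [Fintype α] [DecidableEq α]

def StirPred (m k : ℕ) (σ : Perm α) : Prop :=
  Multiset.card σ.cycleType + (Finset.univ.filter fun x => σ x = x).card = k ∧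
    (∀ c ∈ σ.cycleType, m ≤ c) ∧ ∀ x, σ x = x → m ≤ 1

-- transport pointwise lemma
lemma extend_apply {M : ℕ} (e : α ≃ Fin M) (σ : Perm α) (x : Fin M) :
    σ.extendDomain (e.trans (Equiv.subtypeUnivEquiv (fun _ => trivial)).symm) x
      = e (σ (e.symm x)) := by
  rw [Equiv.Perm.extendDomain_apply_subtype _ _ trivial]
  simp [Equiv.subtypeUnivEquiv]

noncomputable def stirAssociated' (m n k : ℕ) : ℕ :=
  Nat.card {σ : Equiv.Perm (Fin n) // StirPred m k σ}

lemma stirPred_extend_iff {M : ℕ} (e : α ≃ Fin M) (σ : Perm α) (m k : ℕ) :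
    StirPred m k (σ.extendDomain (e.trans (Equiv.subtypeUnivEquiv (fun _ : Fin M => trivial)).symm))
      ↔ StirPred m k σ := by
  set σ' := σ.extendDomain (e.trans (Equiv.subtypeUnivEquiv (fun _ : Fin M => trivial)).symm) with hσ'
  have hct : σ'.cycleType = σ.cycleType := cycleType_extendDomain _
  have hfix : ∀ x : Fin M, (σ' x = x ↔ σ (e.symm x) = e.symm x) := by
    intro x
    rw [hσ', _root_.extend_apply]
    constructor
    · intro h; have := congrArg e.symm h; simpa using this
    · intro h; rw [h]; simp
  have hcard : (Finset.univ.filter fun x : Fin M => σ' x = x).card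
      = (Finset.univ.filter fun a : α => σ a = a).card := by
    apply Finset.card_bij (fun x _ => e.symm x)
    · intro x hx
      simp only [Finset.mem_filter, Finset.mem_univ, true_and] at hx ⊢
      exact (hfix x).mp hx
    · intro x hx y hy h; exact e.symm.injective h
    · intro a ha
      simp only [Finset.mem_filter, Finset.mem_univ, true_and] at ha ⊢
      exact ⟨e a, (hfix (e a)).mpr (by simpa using ha), by simp⟩
  unfold StirPred
  rw [hct, hcard]
  refine and_congr Iff.rfl (and_congr Iff.rfl ?_)
  constructor
  · intro h a ha
    exact h (e a) ((hfix (e a)).mpr (by simpa using ha))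
  · intro h x hx
    exact h _ ((hfix x).mp hx)

lemma natCard_stirPred (m k : ℕ) {M : ℕ} (e : α ≃ Fin M) :
    Nat.card {σ : Perm α // StirPred m k σ} = stirAssociated' m M k := by
  apply Nat.card_congr
  refine ⟨fun σ => ⟨σ.1.extendDomain (e.trans (Equiv.subtypeUnivEquiv (fun _ => trivial)).symm),
      (stirPred_extend_iff e σ.1 m k).mpr σ.2⟩,
    fun ρ => ⟨e.permCongr.symm ρ.1, ?_⟩, ?_, ?_⟩
  · have key : (e.permCongr.symm ρ.1).extendDomain
        (e.trans (Equiv.subtypeUnivEquiv (fun _ : Fin M => trivial)).symm) = ρ.1 := by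
      ext x; rw [_root_.extend_apply]; simp
    have := (stirPred_extend_iff e (e.permCongr.symm ρ.1) m k)
    rw [key] at this
    exact this.mp ρ.2
  · intro σ
    apply Subtype.ext
    ext a
    simp [_root_.extend_apply]
  · intro ρ
    apply Subtype.ext
    ext x
    rw [_root_.extend_apply]
    simp


section Main
variable {N : ℕ}

/-- length of the cycle of `0` -/
def clen (σ : Perm (Fin (N + 1))) : ℕ :=
  if σ 0 = 0 then 1 else ((σ.cycleOf 0).support).card

lemma clen_pos (σ : Perm (Fin (N + 1))) : 1 ≤ clen σ := by
  unfold clen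
  split_ifs with h
  · exact le_refl 1
  · have := Equiv.Perm.two_le_card_support_cycleOf_iff.mpr h
    omega

lemma clen_le (σ : Perm (Fin (N + 1))) : clen σ ≤ N + 1 := by
  unfold clen
  split_ifs with h
  · omega
  · simpa using Finset.card_le_univ ((σ.cycleOf 0).support)

lemma mem_cycleType_of_not_fixed (σ : Perm (Fin (N + 1))) (h : σ 0 ≠ 0) :
    ((σ.cycleOf 0).support).card ∈ σ.cycleType := by
  rw [Equiv.Perm.cycleType_def]
  apply Multiset.mem_map_of_mem
  exact Equiv.Perm.cycleOf_mem_cycleFactorsFinset_iff.mpr (Equiv.Perm.mem_support.mpr h)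

lemma clen_ge (m k : ℕ) (σ : Perm (Fin (N + 1))) (hσ : StirPred m k σ) : m ≤ clen σ := by
  unfold clen
  split_ifs with h
  · exact hσ.2.2 0 h
  · exact hσ.2.1 _ (mem_cycleType_of_not_fixed σ h)

lemma step1 (m k : ℕ) :
    Nat.card {σ : Perm (Fin (N + 1)) // StirPred m k σ}
      = ∑ i ∈ Finset.Ico (m - 1) (N + 1),
          Nat.card {σ : Perm (Fin (N + 1)) // StirPred m k σ ∧ clen σ = i + 1} := by
  classical
  rw [Nat.card_eq_fintype_card, Fintype.card_subtype]
  rw [Finset.card_eq_sum_card_fiberwise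
    (f := fun σ => clen σ - 1) (t := Finset.Ico (m - 1) (N + 1)) ?_]
  · apply Finset.sum_congr rfl
    intro i _
    rw [Nat.card_eq_fintype_card, Fintype.card_subtype, Finset.filter_filter]
    congr 1
    apply Finset.filter_congr
    intro σ _
    have h1 := clen_pos σ
    constructor
    · rintro ⟨h, h2⟩; exact ⟨h, by omega⟩
    · rintro ⟨h, h2⟩; exact ⟨h, by omega⟩
  · intro σ hσ
    rw [Finset.mem_coe, Finset.mem_filter] at hσ
    have h1 := clen_ge m k σ hσ.2
    have h2 := clen_le σ
    rw [Finset.mem_coe, Finset.mem_Ico]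
    show m - 1 ≤ clen σ - 1 ∧ clen σ - 1 < N + 1
    omega


variable {N i : ℕ}

def Cf (f : Fin i ↪ {x : Fin (N + 1) // x ≠ 0}) : Finset (Fin (N + 1)) :=
  insert 0 (Finset.univ.image fun j => (f j).1)

def lf (f : Fin i ↪ {x : Fin (N + 1) // x ≠ 0}) : List (Fin (N + 1)) :=
  0 :: List.ofFn (fun j => (f j).1)

lemma length_lf (f : Fin i ↪ {x : Fin (N + 1) // x ≠ 0}) : (lf f).length = i + 1 := by
  simp [lf]

lemma mem_lf {f : Fin i ↪ {x : Fin (N + 1) // x ≠ 0}} {x : Fin (N + 1)} :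
    x ∈ lf f ↔ x ∈ Cf f := by
  simp only [lf, Cf, List.mem_cons, List.mem_ofFn, Finset.mem_insert, Finset.mem_image,
    Finset.mem_univ, true_and, Set.mem_range]

lemma nodup_lf (f : Fin i ↪ {x : Fin (N + 1) // x ≠ 0}) : (lf f).Nodup := by
  refine List.Nodup.cons ?_ ?_
  · simp only [List.mem_ofFn]
    rintro ⟨j, hj⟩
    exact (f j).2 hj
  · rw [List.nodup_ofFn]
    intro a b hab
    exact f.injective (Subtype.ext hab)

lemma card_Cf (f : Fin i ↪ {x : Fin (N + 1) // x ≠ 0}) : (Cf f).card = i + 1 := by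
  rw [Cf, Finset.card_insert_of_notMem, Finset.card_image_of_injective _
      (fun a b hab => f.injective (Subtype.ext hab))]
  · simp
  · simp only [Finset.mem_image]
    rintro ⟨j, -, hj⟩
    exact (f j).2 hj

/-- the permutation built from cycle data `f` and complement permutation `τ` -/
def gmap (f : Fin i ↪ {x : Fin (N + 1) // x ≠ 0})
    (τ : Perm {x : Fin (N + 1) // x ∉ Cf f}) : Perm (Fin (N + 1)) :=
  (lf f).formPerm * Equiv.Perm.ofSubtype τ

variable (f : Fin i ↪ {x : Fin (N + 1) // x ≠ 0}) (τ : Perm {x : Fin (N + 1) // x ∉ Cf f})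

lemma ofSubtype_fixes {x : Fin (N + 1)} (hx : x ∈ Cf f) : Equiv.Perm.ofSubtype τ x = x :=
  Equiv.Perm.ofSubtype_apply_of_not_mem τ (by simpa using hx)

lemma disjoint_gmap : Equiv.Perm.Disjoint (lf f).formPerm (Equiv.Perm.ofSubtype τ) := by
  intro x
  by_cases hx : x ∈ lf f
  · exact Or.inr (ofSubtype_fixes f τ (mem_lf.mp hx))
  · exact Or.inl (List.formPerm_apply_of_notMem hx)

lemma gmap_apply_mem {x : Fin (N + 1)} (hx : x ∈ lf f) :
    gmap f τ x = (lf f).formPerm x := by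
  rw [gmap, Equiv.Perm.mul_apply, ofSubtype_fixes f τ (mem_lf.mp hx)]

lemma gmap_apply_not_mem {x : Fin (N + 1)} (hx : x ∉ Cf f) :
    gmap f τ x = (τ ⟨x, hx⟩ : _) := by
  rw [gmap, Equiv.Perm.mul_apply, Equiv.Perm.ofSubtype_apply_of_mem τ hx]
  exact List.formPerm_apply_of_notMem (fun h => (τ ⟨x, hx⟩).2 (mem_lf.mp h))

lemma lf_ne_singleton (hi : 1 ≤ i) (x : Fin (N + 1)) : lf f ≠ [x] := by
  intro h
  have := length_lf f
  rw [h] at this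
  simp at this
  omega

lemma support_formPerm_lf (hi : 1 ≤ i) :
    ((lf f).formPerm).support = (lf f).toFinset :=
  List.support_formPerm_of_nodup _ (nodup_lf f) (lf_ne_singleton f hi)

lemma isCycle_formPerm_lf (hi : 1 ≤ i) : ((lf f).formPerm).IsCycle := by
  apply List.isCycle_formPerm (nodup_lf f)
  rw [length_lf]; omega

lemma card_support_formPerm_lf (hi : 1 ≤ i) :
    ((lf f).formPerm).support.card = i + 1 := by
  rw [support_formPerm_lf f hi, List.toFinset_card_of_nodup (nodup_lf f), length_lf]

lemma cycleType_gmap (hi : 1 ≤ i) :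
    (gmap f τ).cycleType = (i + 1) ::ₘ τ.cycleType := by
  rw [gmap, (disjoint_gmap f τ).cycleType_mul, (isCycle_formPerm_lf f hi).cycleType,
    card_support_formPerm_lf f hi, Equiv.Perm.cycleType_ofSubtype]
  rfl

lemma Cf_zero (hi : i = 0) : Cf f = {0} := by
  subst hi
  simp [Cf]

lemma gmap_zero (hi : i = 0) : gmap f τ = Equiv.Perm.ofSubtype τ := by
  subst hi
  have : lf f = [0] := by
    simp [lf, List.ofFn_zero]
  rw [gmap, this, List.formPerm_singleton, one_mul]

lemma cycleType_gmap_zero (hi : i = 0) : (gmap f τ).cycleType = τ.cycleType := by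
  rw [gmap_zero f τ hi, Equiv.Perm.cycleType_ofSubtype]

lemma fixed_filter_gmap (hi : 1 ≤ i) :
    Finset.univ.filter (fun x => gmap f τ x = x)
      = (Finset.univ.filter fun y => τ y = y).map (Function.Embedding.subtype _) := by
  ext x
  simp only [Finset.mem_filter, Finset.mem_univ, true_and, Finset.mem_map,
    Function.Embedding.coe_subtype]
  by_cases hx : x ∈ Cf f
  · constructor
    · intro h
      exfalso
      rw [gmap_apply_mem f τ (mem_lf.mpr hx)] at h
      have hs : x ∈ ((lf f).formPerm).support := by
        rw [support_formPerm_lf f hi, List.mem_toFinset]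
        exact mem_lf.mpr hx
      exact (Equiv.Perm.mem_support.mp hs) h
    · rintro ⟨y, hy, rfl⟩
      exact absurd hx y.2
  · rw [gmap_apply_not_mem f τ hx]
    constructor
    · intro h
      exact ⟨⟨x, hx⟩, Subtype.ext h, rfl⟩
    · rintro ⟨y, hy, rfl⟩
      have : y = ⟨(y : Fin (N+1)), y.2⟩ := rfl
      rw [← this, hy]

lemma fixed_filter_gmap_zero (hi : i = 0) :
    Finset.univ.filter (fun x => gmap f τ x = x)
      = insert 0 ((Finset.univ.filter fun y => τ y = y).map (Function.Embedding.subtype _)) := by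
  ext x
  simp only [Finset.mem_filter, Finset.mem_univ, true_and, Finset.mem_insert, Finset.mem_map,
    Function.Embedding.coe_subtype]
  by_cases hx : x ∈ Cf f
  · rw [Cf_zero f hi] at hx
    simp only [Finset.mem_singleton] at hx
    subst hx
    constructor
    · intro _; exact Or.inl rfl
    · intro _
      rw [gmap_zero f τ hi]
      exact ofSubtype_fixes f τ (by rw [Cf_zero f hi]; simp)
  · rw [gmap_apply_not_mem f τ hx]
    have hx0 : x ≠ 0 := by
      rw [Cf_zero f hi] at hx
      simpa using hx
    constructor
    · intro h
      exact Or.inr ⟨⟨x, hx⟩, Subtype.ext h, rfl⟩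
    · rintro (h | ⟨y, hy, rfl⟩)
      · exact absurd h hx0
      · have : y = ⟨(y : Fin (N+1)), y.2⟩ := rfl
        rw [← this, hy]

lemma zero_mem_Cf : (0 : Fin (N + 1)) ∈ Cf f := Finset.mem_insert_self _ _

lemma clen_gmap_zero (hi : i = 0) : clen (gmap f τ) = 1 := by
  have h0 : gmap f τ 0 = 0 := by
    rw [gmap_zero f τ hi]
    exact ofSubtype_fixes f τ (zero_mem_Cf f)
  rw [clen, if_pos h0]

lemma gmap_zero_ne (hi : 1 ≤ i) : gmap f τ 0 ≠ 0 := by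
  rw [gmap_apply_mem f τ (by simp [lf])]
  intro h
  have hs : (0 : Fin (N+1)) ∈ ((lf f).formPerm).support := by
    rw [support_formPerm_lf f hi, List.mem_toFinset]
    simp [lf]
  exact (Equiv.Perm.mem_support.mp hs) h

lemma cycleOf_gmap (hi : 1 ≤ i) : (gmap f τ).cycleOf 0 = (lf f).formPerm := by
  rw [gmap, Equiv.Perm.cycleOf_mul_of_apply_right_eq_self (disjoint_gmap f τ).commute 0
    (ofSubtype_fixes f τ (zero_mem_Cf f)), (isCycle_formPerm_lf f hi).cycleOf]
  rw [if_neg]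
  intro h
  exact gmap_zero_ne f τ hi (by rw [gmap_apply_mem f τ (by simp [lf])]; exact h)

lemma clen_gmap (hi : 1 ≤ i) : clen (gmap f τ) = i + 1 := by
  rw [clen, if_neg (gmap_zero_ne f τ hi), cycleOf_gmap f τ hi, card_support_formPerm_lf f hi]

lemma stirPred_gmap_iff (m k : ℕ) (hk : 1 ≤ k) (him : m - 1 ≤ i) :
    StirPred m k (gmap f τ) ↔ StirPred m (k - 1) τ := by
  rcases Nat.eq_zero_or_pos i with hi | hi
  · have hm1 : m ≤ 1 := by omega
    unfold StirPred
    rw [cycleType_gmap_zero f τ hi, fixed_filter_gmap_zero f τ hi,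
      Finset.card_insert_of_notMem, Finset.card_map]
    · constructor
      · rintro ⟨h1, h2, h3⟩
        exact ⟨by omega, fun c hc => le_trans hm1 (Equiv.Perm.one_lt_of_mem_cycleType hc).le,
          fun x _ => hm1⟩
      · rintro ⟨h1, h2, h3⟩
        exact ⟨by omega, fun c hc => le_trans hm1 (Equiv.Perm.one_lt_of_mem_cycleType hc).le,
          fun x _ => hm1⟩
    · simp only [Finset.mem_map, Function.Embedding.coe_subtype]
      rintro ⟨y, -, hy⟩
      exact y.2 (hy ▸ zero_mem_Cf f)
  · unfold StirPred
    rw [cycleType_gmap f τ hi, fixed_filter_gmap f τ hi, Finset.card_map]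
    simp only [Multiset.card_cons, Multiset.mem_cons]
    constructor
    · rintro ⟨h1, h2, h3⟩
      refine ⟨by omega, fun c hc => h2 c (Or.inr hc), fun y hy => ?_⟩
      apply h3 y.1
      rw [gmap_apply_not_mem f τ y.2, show (⟨y.1, y.2⟩ : {x : Fin (N+1) // x ∉ Cf f}) = y from rfl,
        hy]
    · rintro ⟨h1, h2, h3⟩
      refine ⟨by omega, ?_, fun x hx => ?_⟩
      · rintro c (rfl | hc)
        · omega
        · exact h2 c hc
      · by_cases hxC : x ∈ Cf f
        · exfalso
          rw [gmap_apply_mem f τ (mem_lf.mpr hxC)] at hx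
          have hs : x ∈ ((lf f).formPerm).support := by
            rw [support_formPerm_lf f hi, List.mem_toFinset]
            exact mem_lf.mpr hxC
          exact (Equiv.Perm.mem_support.mp hs) hx
        · rw [gmap_apply_not_mem f τ hxC] at hx
          exact h3 ⟨x, hxC⟩ (Subtype.ext hx)

lemma gmap_pow_zero (n : ℕ) : ((gmap f τ) ^ n) 0 = ((lf f).formPerm ^ n) 0 := by
  rw [gmap, (disjoint_gmap f τ).commute.mul_pow, Equiv.Perm.mul_apply, ← map_pow]
  rw [Equiv.Perm.ofSubtype_apply_of_not_mem (τ ^ n) (by simpa using zero_mem_Cf f)]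

lemma getElem_idx_congr {γ : Type*} {l : List γ} {a b : ℕ} (h : a = b) (ha : a < l.length) :
    l[a]'ha = l[b]'(h ▸ ha) := by subst h; rfl

lemma gmap_pow_apply (j : Fin i) : ((gmap f τ) ^ ((j : ℕ) + 1)) 0 = (f j).1 := by
  rw [gmap_pow_zero]
  have hlen : (lf f).length = i + 1 := length_lf f
  have h := List.formPerm_pow_apply_getElem (lf f) (nodup_lf f) ((j : ℕ) + 1) 0
    (by omega)
  have h0 : (lf f)[0]'(by omega) = 0 := rfl
  rw [h0] at h
  rw [h, getElem_idx_congr (show (0 + ((j : ℕ) + 1)) % (lf f).length = (j : ℕ) + 1 by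
    rw [hlen, Nat.zero_add]; exact Nat.mod_eq_of_lt (Nat.succ_lt_succ j.isLt))]
  show (0 :: List.ofFn (fun j => ((f j : {x : Fin (N+1) // x ≠ 0}) : Fin (N+1))))[(j : ℕ) + 1]'_ = _
  show (List.ofFn (fun j => ((f j : {x : Fin (N+1) // x ≠ 0}) : Fin (N+1))))[(j : ℕ)]'(by simp) = _
  rw [List.getElem_ofFn]

lemma clen_gmap_all : clen (gmap f τ) = i + 1 := by
  rcases Nat.eq_zero_or_pos i with hi | hi
  · rw [clen_gmap_zero f τ hi, hi]
  · exact clen_gmap f τ hi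

lemma gmap_surjective (m k : ℕ) (σ : Perm (Fin (N + 1))) (hσ : clen σ = i + 1) :
    ∃ (f : Fin i ↪ {x : Fin (N + 1) // x ≠ 0}) (τ : Perm {x : Fin (N + 1) // x ∉ Cf f}),
      gmap f τ = σ := by
  rcases Nat.eq_zero_or_pos i with hi | hi
  · subst hi
    have h0 : σ 0 = 0 := by
      by_contra h0
      rw [clen, if_neg h0] at hσ
      have := Equiv.Perm.two_le_card_support_cycleOf_iff.mpr h0
      omega
    refine ⟨⟨fun j => j.elim0, fun j => j.elim0⟩, ?_⟩
    have hCf : Cf (⟨fun j => j.elim0, fun j => j.elim0⟩ : Fin 0 ↪ {x : Fin (N + 1) // x ≠ 0})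
        = {0} := Cf_zero _ rfl
    have hp : ∀ x, (x ∉ Cf (⟨fun j => j.elim0, fun j => j.elim0⟩ :
        Fin 0 ↪ {x : Fin (N + 1) // x ≠ 0})) ↔ (σ x ∉ Cf (⟨fun j => j.elim0, fun j => j.elim0⟩ :
        Fin 0 ↪ {x : Fin (N + 1) // x ≠ 0})) := by
      intro x
      rw [hCf]
      simp only [Finset.mem_singleton]
      constructor
      · intro hx h
        exact hx (σ.injective (h.trans h0.symm))
      · intro hx h
        exact hx (h ▸ h0)
    refine ⟨σ.subtypePerm (fun x => (hp x).symm), ?_⟩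
    rw [gmap_zero _ _ rfl]
    refine Equiv.ext fun x => ?_
    by_cases hx : x ∈ Cf (⟨fun j => j.elim0, fun j => j.elim0⟩ :
        Fin 0 ↪ {x : Fin (N + 1) // x ≠ 0})
    · rw [ofSubtype_fixes _ _ hx]
      rw [hCf] at hx
      simp only [Finset.mem_singleton] at hx
      subst hx
      exact h0.symm
    · rw [Equiv.Perm.ofSubtype_apply_of_mem (σ.subtypePerm (fun x => (hp x).symm)) hx]
      rfl
  · have h0 : σ 0 ≠ 0 := by
      intro h0
      rw [clen, if_pos h0] at hσ
      omega
    have hsup : (0 : Fin (N + 1)) ∈ σ.support := Equiv.Perm.mem_support.mpr h0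
    set lst := σ.toList 0 with hlst
    have hlen : lst.length = i + 1 := by
      rw [hlst, Equiv.Perm.length_toList]
      rw [clen, if_neg h0] at hσ
      exact hσ
    have hnodup : lst.Nodup := Equiv.Perm.nodup_toList σ 0
    have hget : ∀ n (hn : n < lst.length), lst.get ⟨n, hn⟩ = (σ ^ n) 0 := fun n hn =>
      Equiv.Perm.getElem_toList (p := σ) (x := 0) n hn
    have h00 : lst.get ⟨0, by omega⟩ = 0 := by rw [hget]; simp
    have hne0 : ∀ (j : Fin i), lst.get ⟨(j : ℕ) + 1, by omega⟩ ≠ 0 := by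
      intro j h
      rw [← h00] at h
      have := (List.Nodup.get_inj_iff hnodup).mp h
      simp at this
    refine ⟨⟨fun j => ⟨lst.get ⟨(j : ℕ) + 1, by omega⟩, hne0 j⟩, ?_⟩, ?_⟩
    · intro a b hab
      simp only [Subtype.mk.injEq] at hab
      have := (List.Nodup.get_inj_iff hnodup).mp hab
      simp only [Fin.mk.injEq, Nat.add_right_cancel_iff] at this
      exact Fin.ext this
    set f : Fin i ↪ {x : Fin (N + 1) // x ≠ 0} :=
      ⟨fun j => ⟨lst.get ⟨(j : ℕ) + 1, by omega⟩, hne0 j⟩, by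
        intro a b hab
        simp only [Subtype.mk.injEq] at hab
        have := (List.Nodup.get_inj_iff hnodup).mp hab
        simp only [Fin.mk.injEq, Nat.add_right_cancel_iff] at this
        exact Fin.ext this⟩ with hf
    have hlf : lf f = lst := by
      apply List.ext_get
      · rw [length_lf, hlen]
      · intro n h1 h2
        match n with
        | 0 => exact h00.symm
        | (n + 1) =>
          have hn : n < i := by rw [length_lf] at h1; omega
          show (List.ofFn _).get ⟨n, _⟩ = _
          rw [List.get_ofFn]
          rfl
    have hmem : ∀ x, x ∈ lst ↔ σ.SameCycle 0 x := by
      intro x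
      rw [hlst, Equiv.Perm.mem_toList_iff]
      exact ⟨fun h => h.1, fun h => ⟨h, hsup⟩⟩
    have hp : ∀ x, (x ∉ Cf f) ↔ (σ x ∉ Cf f) := by
      intro x
      rw [← mem_lf, ← mem_lf, hlf, not_iff_not, hmem, hmem]
      exact (Equiv.Perm.sameCycle_apply_right).symm
    refine ⟨σ.subtypePerm (fun x => (hp x).symm), ?_⟩
    refine Equiv.ext fun x => ?_
    by_cases hx : x ∈ lst
    · rw [gmap_apply_mem f _ (by rw [hlf]; exact hx), hlf, hlst,
        Equiv.Perm.formPerm_toList]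
      exact ((hmem x).mp hx).cycleOf_apply
    · have hx' : x ∉ Cf f := by rw [← mem_lf, hlf]; exact hx
      rw [gmap_apply_not_mem f _ hx']
      rfl

abbrev TSig (N i m k : ℕ) := Σ f : Fin i ↪ {x : Fin (N + 1) // x ≠ 0},
  {τ : Perm {x : Fin (N + 1) // x ∉ Cf f} // StirPred m (k - 1) τ}

lemma fiber_equiv (m k : ℕ) (hk : 1 ≤ k) (him : m - 1 ≤ i) :
    Nat.card {σ : Perm (Fin (N + 1)) // StirPred m k σ ∧ clen σ = i + 1}
      = Nat.card (TSig N i m k) := by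
  symm
  apply Nat.card_congr
  refine Equiv.ofBijective (fun x => ⟨gmap x.1 x.2.1,
    (stirPred_gmap_iff x.1 x.2.1 m k hk him).mpr x.2.2, clen_gmap_all x.1 x.2.1⟩) ⟨?_, ?_⟩
  · rintro ⟨f1, τ1, h1⟩ ⟨f2, τ2, h2⟩ h
    simp only [Subtype.mk.injEq] at h
    have hf : f1 = f2 := by
      refine DFunLike.ext _ _ fun j => Subtype.ext ?_
      rw [← gmap_pow_apply f1 τ1 j, ← gmap_pow_apply f2 τ2 j, h]
    subst hf
    have hτ : τ1 = τ2 := by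
      have h2' : Equiv.Perm.ofSubtype τ1 = Equiv.Perm.ofSubtype τ2 := mul_left_cancel h
      refine Equiv.ext fun y0 => Subtype.ext ?_
      have := congrArg (fun g : Perm (Fin (N + 1)) => g (y0 : Fin (N + 1))) h2'
      simpa only [Equiv.Perm.ofSubtype_apply_coe] using this
    subst hτ
    rfl
  · rintro ⟨σ, hσ, hclen⟩
    obtain ⟨f, τ, hfτ⟩ := gmap_surjective m k σ hclen
    exact ⟨⟨f, τ, (stirPred_gmap_iff f τ m k hk him).mp (by rw [hfτ]; exact hσ)⟩,
      Subtype.ext hfτ⟩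

lemma card_compl_Cf (hiN : i ≤ N) :
    Fintype.card {x : Fin (N + 1) // x ∉ Cf f} = N - i := by
  classical
  rw [Fintype.card_subtype]
  have h : Finset.univ.filter (fun x => x ∉ Cf f) = Finset.univ \ Cf f := by
    ext x; simp
  rw [h, Finset.card_sdiff_of_subset (Finset.subset_univ _), Finset.card_univ, Fintype.card_fin, card_Cf f]
  omega

lemma card_nonzero : Fintype.card {x : Fin (N + 1) // x ≠ 0} = N := by
  rw [Fintype.card_subtype_compl, Fintype.card_fin, Fintype.card_subtype_eq]
  omega

lemma card_TSig (m k : ℕ) (hiN : i ≤ N) :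
    Nat.card (TSig N i m k) = N.descFactorial i * stirAssociated' m (N - i) (k - 1) := by
  classical
  rw [Nat.card_eq_fintype_card, Fintype.card_sigma]
  have hcount : ∀ f : Fin i ↪ {x : Fin (N + 1) // x ≠ 0},
      Fintype.card {τ : Perm {x : Fin (N + 1) // x ∉ Cf f} // StirPred m (k - 1) τ}
        = stirAssociated' m (N - i) (k - 1) := by
    intro f
    rw [← Nat.card_eq_fintype_card]
    exact natCard_stirPred _ _ (Fintype.equivFinOfCardEq (card_compl_Cf f hiN))
  rw [Finset.sum_congr rfl (fun f _ => hcount f), Finset.sum_const, Finset.card_univ,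
    Fintype.card_embedding_eq, card_nonzero, Fintype.card_fin, smul_eq_mul]

lemma stir_eq (m n k : ℕ) : stirAssociated m n k = stirAssociated' m n k := rfl

lemma perm_fin_zero_eq_one (σ : Perm (Fin 0)) : σ = 1 :=
  Equiv.ext fun x => x.elim0

lemma stir00 (m : ℕ) : stirAssociated' m 0 0 = 1 := by
  have hall : ∀ σ : Perm (Fin 0), StirPred m 0 σ := by
    intro σ
    rw [perm_fin_zero_eq_one σ]
    refine ⟨?_, ?_, ?_⟩
    · simp [Equiv.Perm.cycleType_one]
    · simp [Equiv.Perm.cycleType_one]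
    · intro x; exact x.elim0
  rw [stirAssociated', Nat.card_congr (Equiv.subtypeUnivEquiv hall), Nat.card_eq_fintype_card]
  simp

lemma stir0k (m k : ℕ) (hk : 1 ≤ k) : stirAssociated' m 0 k = 0 := by
  rw [stirAssociated']
  have : IsEmpty {σ : Perm (Fin 0) // StirPred m k σ} := by
    refine ⟨fun x => ?_⟩
    obtain ⟨σ, h1, -, -⟩ := x
    rw [perm_fin_zero_eq_one σ] at h1
    simp only [Equiv.Perm.cycleType_one] at h1
    rw [show (Finset.univ.filter fun x : Fin 0 => (1 : Perm (Fin 0)) x = x).card = 0 from rfl]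
      at h1
    simp at h1
    omega
  exact Nat.card_of_isEmpty

lemma stirn0 (m n : ℕ) (hn : 1 ≤ n) : stirAssociated' m n 0 = 0 := by
  rw [stirAssociated']
  have : IsEmpty {σ : Perm (Fin n) // StirPred m 0 σ} := by
    refine ⟨fun x => ?_⟩
    obtain ⟨σ, h1, -, -⟩ := x
    have hct : Multiset.card σ.cycleType = 0 := by omega
    have hσ1 : σ = 1 := Equiv.Perm.card_cycleType_eq_zero.mp hct
    subst hσ1
    have : (Finset.univ.filter fun x : Fin n => (1 : Perm (Fin n)) x = x) = Finset.univ := by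
      simp
    rw [this, Finset.card_univ, Fintype.card_fin] at h1
    omega
  exact Nat.card_of_isEmpty


/-- The recurrence for the associated Stirling numbers of the first kind:
`[n over k]_{≥m} = ∑_{i=m-1}^{n-1} (n-1)!/(n-1-i)! [n-i-1 over k-1]_{≥m}`. -/
theorem stirAssociated_recurrence (m : ℕ) (hm : 1 ≤ m) :
    stirAssociated m 0 0 = 1 ∧
      (∀ n : ℕ, 0 < n → stirAssociated m n 0 = 0 ∧ stirAssociated m 0 n = 0) ∧
      ∀ n k : ℕ, 1 ≤ n → 1 ≤ k →
        stirAssociated m n k =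
          ∑ i ∈ Finset.Ico (m - 1) n,
            (n - 1).descFactorial i * stirAssociated m (n - i - 1) (k - 1) := by
  refine ⟨stir00 m, fun n hn => ⟨?_, ?_⟩, fun n k hn hk => ?_⟩
  · rw [stir_eq]; exact stirn0 m n hn
  · rw [stir_eq]; exact stir0k m n hn
  · obtain ⟨N, rfl⟩ : ∃ N, n = N + 1 := ⟨n - 1, by omega⟩
    rw [stir_eq, stirAssociated', step1 m k]
    apply Finset.sum_congr rfl
    intro i hi
    rw [Finset.mem_Ico] at hi
    rw [fiber_equiv m k hk hi.1, card_TSig m k (by omega), stir_eq]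
    congr 2
    omega
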